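/- Let L be a field, G a group, ρ: G → GL_n(L) an absolutely irreducible representation, γ a field automorphism of L, and ε: G → L^× a character. Then γ∘ρ (applying γ to every matrix entry) is equivalent to ρ ⊗ ε (i.e. γ∘ρ = M(ρ ⊗ ε)M⁻¹ for some M ∈ GL_n(L)) if and only if γ(Tr(ρ(g))) = Tr(ρ(g))·ε(g) for all g ∈ G. -/

import Mathlib

open Matrix

noncomputable section

/-- Absolute irreducibility: the induced representation on `L̄^n` is irreducible. -/
def MatAbsIrred {G : Type*} (n : ℕ) (L : Type*) [Field L]
    (ρ : G → Matrix (Fin n) (Fin n) L) : Prop :=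
  ∀ W : Submodule (AlgebraicClosure L) (Fin n → AlgebraicClosure L),
    (∀ g, ∀ w ∈ W, ((ρ g).map (algebraMap L (AlgebraicClosure L))).mulVec w ∈ W) →
    W = ⊥ ∨ W = ⊤


def evm {K : Type*} [CommRing K] {n : ℕ} (x : Fin n → K) :
    Matrix (Fin n) (Fin n) K →ₗ[K] (Fin n → K) where
  toFun A := A.mulVec x
  map_add' A B := Matrix.add_mulVec A B x
  map_smul' c A := by simp [Matrix.smul_mulVec]

@[simp] lemma evm_apply {K : Type*} [CommRing K] {n : ℕ} (x : Fin n → K)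
    (A : Matrix (Fin n) (Fin n) K) : evm x A = A.mulVec x := rfl

theorem exists_comp_eq {R M N P : Type*} [Ring R] [AddCommGroup M] [AddCommGroup N]
    [AddCommGroup P] [Module R M] [Module R N] [Module R P]
    (f : M →ₗ[R] N) (g : M →ₗ[R] P)
    (hf : Function.Surjective f) (h : LinearMap.ker f ≤ LinearMap.ker g) :
    ∃ φ : N →ₗ[R] P, ∀ x, φ (f x) = g x := by
  refine ⟨((LinearMap.ker f).liftQ g h).comp
    (f.quotKerEquivOfSurjective hf).symm.toLinearMap, fun x => ?_⟩
  have hx : (f.quotKerEquivOfSurjective hf).symm (f x) = Submodule.Quotient.mk x := by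
    rw [LinearEquiv.symm_apply_eq]; rfl
  simp [hx]

theorem mul_mem_span_range {K : Type*} [CommRing K] {n : ℕ} {G : Type*} [Monoid G]
    (ρ : G →* Matrix (Fin n) (Fin n) K) {X Y : Matrix (Fin n) (Fin n) K}
    (hX : X ∈ Submodule.span K (Set.range ⇑ρ)) (hY : Y ∈ Submodule.span K (Set.range ⇑ρ)) :
    X * Y ∈ Submodule.span K (Set.range ⇑ρ) := by
  induction hX using Submodule.span_induction with
  | mem x hx =>
    obtain ⟨g, rfl⟩ := hx
    induction hY using Submodule.span_induction with
    | mem y hy =>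
      obtain ⟨h, rfl⟩ := hy
      exact (map_mul ρ g h) ▸ Submodule.subset_span (Set.mem_range_self (g * h))
    | zero => simp
    | add y z _ _ hy hz => rw [mul_add]; exact Submodule.add_mem _ hy hz
    | smul c y _ hy => rw [mul_smul_comm]; exact Submodule.smul_mem _ c hy
  | zero => simp
  | add x y _ _ hx hy => rw [add_mul]; exact Submodule.add_mem _ hx hy
  | smul c x _ hx => rw [smul_mul_assoc]; exact Submodule.smul_mem _ c hx

theorem burnside_claim {K : Type*} [Field K] [IsAlgClosed K] {n : ℕ} {G : Type*} [Group G]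
    (ρ : G →* Matrix (Fin n) (Fin n) K)
    (hirr : ∀ W : Submodule K (Fin n → K),
      (∀ g, ∀ w ∈ W, (ρ g).mulVec w ∈ W) → W = ⊥ ∨ W = ⊤)
    (k : ℕ) (v : Fin k → Fin n → K) (hv : LinearIndependent K v) (w : Fin k → Fin n → K) :
    ∃ s ∈ Submodule.span K (Set.range ⇑ρ), ∀ i, s.mulVec (v i) = w i := by
  induction k with
  | zero => exact ⟨0, Submodule.zero_mem _, fun i => i.elim0⟩
  | succ k IH =>
    set SP := Submodule.span K (Set.range ⇑ρ) with hSP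
    have hv2 : LinearIndependent K (Fin.init v) ∧
        v (Fin.last k) ∉ Submodule.span K (Set.range (Fin.init v)) := by
      rw [← linearIndependent_fin_snoc, Fin.snoc_init_self]
      exact hv
    obtain ⟨hvi, hlast⟩ := hv2
    set vl := v (Fin.last k) with hvl
    set T : Submodule K (Matrix (Fin n) (Fin n) K) :=
      SP ⊓ ⨅ i : Fin k, LinearMap.ker (evm (Fin.init v i)) with hT
    have hTmem : ∀ {s}, s ∈ T ↔ s ∈ SP ∧ ∀ i, s.mulVec (Fin.init v i) = 0 := by
      intro s
      simp [hT, Submodule.mem_inf, Submodule.mem_iInf, LinearMap.mem_ker]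
    have hTmul : ∀ g, ∀ s ∈ T, ρ g * s ∈ T := by
      intro g s hs
      rw [hTmem] at hs ⊢
      refine ⟨mul_mem_span_range ρ (Submodule.subset_span (Set.mem_range_self g)) hs.1,
        fun i => ?_⟩
      rw [← Matrix.mulVec_mulVec, hs.2 i, Matrix.mulVec_zero]
    set U : Submodule K (Fin n → K) := T.map (evm vl) with hU
    have hUinv : ∀ g, ∀ u ∈ U, (ρ g).mulVec u ∈ U := by
      rintro g u ⟨s, hs, rfl⟩
      exact ⟨ρ g * s, hTmul g s hs, by simp [Matrix.mulVec_mulVec]⟩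
    rcases hirr U hUinv with hUbot | hUtop
    · exfalso
      set Ψ : SP →ₗ[K] (Fin k → Fin n → K) :=
        LinearMap.pi (fun i => (evm (Fin.init v i)).comp SP.subtype) with hΨ
      have hΨapp : ∀ (s : SP) (i : Fin k), Ψ s i = (s : Matrix (Fin n) (Fin n) K).mulVec
          (Fin.init v i) := fun s i => rfl
      have hΨs : Function.Surjective Ψ := by
        intro w'
        obtain ⟨s, hs, hsw⟩ := IH (Fin.init v) hvi w'
        exact ⟨⟨s, hs⟩, funext hsw⟩
      set B : SP →ₗ[K] (Fin n → K) := (evm vl).comp SP.subtype with hB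
      have hker : LinearMap.ker Ψ ≤ LinearMap.ker B := by
        intro s hs
        rw [LinearMap.mem_ker] at hs ⊢
        have hsT : (s : Matrix (Fin n) (Fin n) K) ∈ T :=
          hTmem.2 ⟨s.2, fun i => congrFun hs i⟩
        have : (s : Matrix (Fin n) (Fin n) K).mulVec vl ∈ U := ⟨s, hsT, rfl⟩
        rw [hUbot] at this
        simp at this; exact this
      obtain ⟨h, hh⟩ := exists_comp_eq Ψ B hΨs hker
      have hequiv : ∀ g x, h (fun i => (ρ g).mulVec (x i)) = (ρ g).mulVec (h x) := by
        intro g x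
        obtain ⟨s, rfl⟩ := hΨs x
        have hgs : ρ g * (s : Matrix (Fin n) (Fin n) K) ∈ SP :=
          mul_mem_span_range ρ (Submodule.subset_span (Set.mem_range_self g)) s.2
        have h1 : (fun i => (ρ g).mulVec (Ψ s i)) = Ψ ⟨ρ g * s, hgs⟩ := by
          funext i
          rw [hΨapp, hΨapp]
          simp [Matrix.mulVec_mulVec]
        rw [h1, hh, hh]
        show (ρ g * (s : Matrix (Fin n) (Fin n) K)).mulVec vl = (ρ g).mulVec ((s : Matrix (Fin n) (Fin n) K).mulVec vl)
        rw [Matrix.mulVec_mulVec]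
      haveI : Nontrivial (Fin n → K) := nontrivial_of_ne vl 0 (hv.ne_zero _)
      have hsingle : ∀ i : Fin k, ∃ c : K, ∀ y, h (Pi.single i y) = c • y := by
        intro i
        set hi : Module.End K (Fin n → K) :=
          h.comp (LinearMap.single K (fun _ : Fin k => Fin n → K) i) with hhi
        have hiapp : ∀ y, hi y = h (Pi.single i y) := fun y => rfl
        have hic : ∀ g y, hi ((ρ g).mulVec y) = (ρ g).mulVec (hi y) := by
          intro g y
          rw [hiapp, hiapp, ← hequiv]
          congr 1
          funext j
          by_cases hj : j = i
          · subst hj; simp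
          · simp [Pi.single_eq_of_ne hj, Matrix.mulVec_zero]
        obtain ⟨c, hc⟩ := Module.End.exists_eigenvalue hi
        have hWinv : ∀ g, ∀ y ∈ Module.End.eigenspace hi c, (ρ g).mulVec y ∈
            Module.End.eigenspace hi c := by
          intro g y hy
          rw [Module.End.mem_eigenspace_iff] at hy ⊢
          rw [hic, hy, Matrix.mulVec_smul]
        rcases hirr _ hWinv with hbot | htop
        · exact absurd hbot hc
        · exact ⟨c, fun y => Module.End.mem_eigenspace_iff.1 (htop ▸ Submodule.mem_top)⟩
      choose c hc using hsingle
      have h1 : h (Ψ ⟨1, Submodule.subset_span ⟨1, map_one ρ⟩⟩) = vl := by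
        rw [hh]
        show (1 : Matrix (Fin n) (Fin n) K).mulVec vl = vl
        exact Matrix.one_mulVec vl
      have h2 : Ψ ⟨1, Submodule.subset_span ⟨1, map_one ρ⟩⟩ = Fin.init v := by
        funext i
        rw [hΨapp]
        exact Matrix.one_mulVec _
      have h4 : h (Fin.init v) = ∑ i : Fin k, c i • Fin.init v i := by
        conv_lhs => rw [← Finset.univ_sum_single (Fin.init v)]
        rw [map_sum]
        exact Finset.sum_congr rfl fun i _ => hc i _
      have h3 : vl = ∑ i : Fin k, c i • Fin.init v i := by rw [← h1, h2, h4]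
      exact hlast (h3 ▸ Submodule.sum_mem _ fun i _ =>
        Submodule.smul_mem _ _ (Submodule.subset_span (Set.mem_range_self i)))
    · obtain ⟨s₀, hs₀, hs₀v⟩ := IH (Fin.init v) hvi (Fin.init w)
      have hwU : w (Fin.last k) - s₀.mulVec vl ∈ U := by rw [hUtop]; trivial
      obtain ⟨t, htT0, htv⟩ := hwU
      have htT : t ∈ SP ∧ ∀ i, t.mulVec (Fin.init v i) = 0 := hTmem.1 htT0
      refine ⟨s₀ + t, Submodule.add_mem _ hs₀ htT.1, fun i => ?_⟩
      refine Fin.lastCases ?_ (fun j => ?_) i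
      · rw [Matrix.add_mulVec]
        have : t.mulVec vl = w (Fin.last k) - s₀.mulVec vl := htv
        rw [this]
        abel
      · have hvj : v j.castSucc = Fin.init v j := rfl
        rw [hvj, Matrix.add_mulVec, htT.2 j, add_zero, hs₀v j]
        rfl
theorem burnside_span {K : Type*} [Field K] [IsAlgClosed K] {n : ℕ} {G : Type*} [Group G]
    (ρ : G →* Matrix (Fin n) (Fin n) K)
    (hirr : ∀ W : Submodule K (Fin n → K),
      (∀ g, ∀ w ∈ W, (ρ g).mulVec w ∈ W) → W = ⊥ ∨ W = ⊤) :
    Submodule.span K (Set.range ⇑ρ) = ⊤ := by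
  rw [eq_top_iff]
  rintro X -
  have hind : LinearIndependent K (fun i : Fin n => (Pi.single i 1 : Fin n → K)) := by
    have h0 := (Pi.basisFun K (Fin n)).linearIndependent
    have he : ⇑(Pi.basisFun K (Fin n)) = fun i : Fin n => (Pi.single i 1 : Fin n → K) :=
      funext fun i => Pi.basisFun_apply K (Fin n) i
    rwa [he] at h0
  obtain ⟨s, hs, hsv⟩ := burnside_claim ρ hirr n _ hind (fun i => X.mulVec (Pi.single i 1))
  have hsX : s = X := by
    ext a b
    have h := congrFun (hsv b) a
    simpa using h
  exact hsX ▸ hs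

/-- trace of `X * single j i 1` is `X i j`. -/
theorem trace_mul_stdBasisMatrix {R : Type*} [CommRing R] {n : ℕ}
    (X : Matrix (Fin n) (Fin n) R) (i j : Fin n) :
    (X * single j i 1).trace = X i j := by
  simp [Matrix.trace, Matrix.diag, Matrix.mul_apply, Matrix.single, Matrix.of_apply,
    ite_and, Finset.sum_ite_eq, Finset.sum_ite_eq']
theorem trace_map' {R S : Type*} [CommRing R] [CommRing S] {n : ℕ} (f : R →+* S)
    (A : Matrix (Fin n) (Fin n) R) : (A.map ⇑f).trace = f A.trace := by
  have h := AddMonoidHom.map_trace (f : R →+ S) A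
  exact h.symm

theorem span_range_rho_eq_top {G : Type*} [Group G] {L : Type*} [Field L] {n : ℕ}
    (ρ : G →* Matrix (Fin n) (Fin n) L) (hirr : MatAbsIrred n L fun g => ρ g) :
    Submodule.span L (Set.range ⇑ρ) = ⊤ := by
  set K := AlgebraicClosure L
  set f := algebraMap L K with hf
  set ρK : G →* Matrix (Fin n) (Fin n) K := (f.mapMatrix.toMonoidHom).comp ρ with hρK
  have hρKapp : ∀ g, ρK g = (ρ g).map ⇑f := fun g => rfl
  have hirrK : ∀ W : Submodule K (Fin n → K),
      (∀ g, ∀ w ∈ W, (ρK g).mulVec w ∈ W) → W = ⊥ ∨ W = ⊤ :=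
    fun W hW => hirr W (fun g w hw => hW g w hw)
  have hK := burnside_span ρK hirrK
  by_contra hne
  obtain ⟨φf, hφf0, hφfmap⟩ :=
    Submodule.exists_dual_map_eq_bot_of_lt_top (lt_top_iff_ne_top.2 hne)
      inferInstance
  set Y : Matrix (Fin n) (Fin n) L := Matrix.of fun i j => φf (single j i 1) with hY
  have hfY : ∀ X : Matrix (Fin n) (Fin n) L, φf X = (X * Y).trace := by
    intro X
    have h1 : φf X = ∑ a : Fin n, ∑ b : Fin n, X a b * Y b a := by
      conv_lhs => rw [matrix_eq_sum_single X]
      rw [map_sum]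
      refine Finset.sum_congr rfl fun a _ => ?_
      rw [map_sum]
      refine Finset.sum_congr rfl fun b _ => ?_
      have h2 : single a b (X a b) = X a b • single a b (1 : L) := by
        rw [smul_single, smul_eq_mul, mul_one]
      rw [h2, _root_.map_smul, smul_eq_mul]
      rfl
    rw [h1]
    simp [Matrix.trace, Matrix.diag, Matrix.mul_apply]
  have hY0 : Y ≠ 0 := by
    intro h0
    apply hφf0
    apply LinearMap.ext
    intro X
    rw [hfY, h0, mul_zero, trace_zero]
    rfl
  have hgY : ∀ g, ((ρ g) * Y).trace = 0 := by
    intro g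
    rw [← hfY]
    have hmem : φf (ρ g) ∈ Submodule.map φf (Submodule.span L (Set.range ⇑ρ)) :=
      ⟨ρ g, Submodule.subset_span (Set.mem_range_self g), rfl⟩
    rw [hφfmap] at hmem
    simpa using hmem
  set YK := Y.map ⇑f with hYK
  have hYK0 : YK ≠ 0 := by
    intro h0
    apply hY0
    ext i j
    have h1 : f (Y i j) = 0 := congrFun (congrFun h0 i) j
    have h2 : Function.Injective ⇑f := f.injective
    simpa using h2 (by rw [h1, map_zero])
  have hall : ∀ s, (s * YK).trace = 0 := by
    intro s
    have hs : s ∈ Submodule.span K (Set.range ⇑ρK) := hK ▸ Submodule.mem_top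
    induction hs using Submodule.span_induction with
    | mem x hx =>
      obtain ⟨g, rfl⟩ := hx
      have h3 : ρK g * YK = ((ρ g) * Y).map ⇑f := by
        rw [hρKapp, hYK, Matrix.map_mul]
      rw [h3, _root_.trace_map', hgY, map_zero]
    | zero => simp
    | add x y _ _ hx hy => rw [add_mul, trace_add, hx, hy, add_zero]
    | smul c x _ hx => rw [smul_mul_assoc, trace_smul, hx, smul_zero]
  apply hYK0
  ext i j
  have h4 := hall (single j i 1)
  rw [trace_mul_comm, trace_mul_stdBasisMatrix] at h4
  simpa using h4
theorem one_eq_sum_std {L : Type*} [Field L] {n : ℕ} :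
    (1 : Matrix (Fin n) (Fin n) L) = ∑ i, single i i (1 : L) := by
  ext a b
  simp [Matrix.one_apply, Matrix.sum_apply, Matrix.single, Matrix.of_apply, ite_and,
    Finset.sum_ite_eq, eq_comm]

theorem mul_std_col {L : Type*} [Field L] {n : ℕ} (X : Matrix (Fin n) (Fin n) L) (j i0 : Fin n) :
    X * single j i0 1 = ∑ k, X k j • single k i0 (1 : L) := by
  ext a b
  simp [Matrix.mul_apply, Matrix.sum_apply, Matrix.single, Matrix.of_apply, ite_and,
    Finset.sum_ite_eq, Finset.sum_ite_eq', mul_ite, ite_mul]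

theorem skolem_noether {L : Type*} [Field L] {n : ℕ} (hn : 0 < n)
    (φ : Matrix (Fin n) (Fin n) L →ₗ[L] Matrix (Fin n) (Fin n) L)
    (hmul : ∀ X Y, φ (X * Y) = φ X * φ Y) (hone : φ 1 = 1) :
    ∃ M : Matrix (Fin n) (Fin n) L, IsUnit M ∧ ∀ X, φ X = M * X * M⁻¹ := by
  set i0 : Fin n := ⟨0, hn⟩ with hi0
  have h00 : φ (single i0 i0 1) ≠ 0 := by
    intro h0
    have hcontra : (1 : Matrix (Fin n) (Fin n) L) = 0 := by
      calc (1 : Matrix (Fin n) (Fin n) L) = φ 1 := hone.symm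
        _ = ∑ i, φ (single i i 1) := by rw [one_eq_sum_std, map_sum]
        _ = 0 := Finset.sum_eq_zero fun i _ => by
            have hdecomp : single i i (1 : L) =
                single i i0 1 * single i0 i0 1 * single i0 i 1 := by
              rw [Matrix.single_mul_single_same, Matrix.single_mul_single_same]
              norm_num
            rw [hdecomp, hmul, hmul, h0, mul_zero, zero_mul]
    have := congrFun (congrFun hcontra i0) i0
    simp [Matrix.one_apply] at this
  have hex : ∃ u, (φ (single i0 i0 1)).mulVec u ≠ 0 := by
    by_contra hco
    push_neg at hco
    apply h00
    ext i j
    have h5 := congrFun (hco (Pi.single j 1)) i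
    rw [Matrix.mulVec_single] at h5
    simpa using h5
  obtain ⟨u, hu⟩ := hex
  set v := (φ (single i0 i0 1)).mulVec u with hvdef
  have hfv : (φ (single i0 i0 1)).mulVec v = v := by
    rw [hvdef, Matrix.mulVec_mulVec, ← hmul, Matrix.single_mul_single_same, mul_one]
  set M : Matrix (Fin n) (Fin n) L :=
    Matrix.of (fun i j => (φ (single j i0 1)).mulVec v i) with hM
  have hMX : ∀ X, φ X * M = M * X := by
    intro X
    ext i j
    have e1 : (φ X * M) i j = ((φ X * φ (single j i0 1)) *ᵥ v) i := by
      rw [← Matrix.mulVec_mulVec]; rfl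
    have e3 : φ X * φ (single j i0 1) = ∑ k, X k j • φ (single k i0 1) := by
      rw [← hmul, mul_std_col, map_sum]
      exact Finset.sum_congr rfl fun k _ => by rw [_root_.map_smul]
    have e4 : ((∑ k, X k j • φ (single k i0 1)) *ᵥ v) i
        = ∑ k, X k j * ((φ (single k i0 1)) *ᵥ v) i := by
      have h6 := map_sum (evm v) (fun k => X k j • φ (single k i0 1)) Finset.univ
      have h7 : ∀ k, evm v (X k j • φ (single k i0 1))
          = X k j • (φ (single k i0 1) *ᵥ v) := fun k => by
        rw [_root_.map_smul]; rfl
      calc ((∑ k, X k j • φ (single k i0 1)) *ᵥ v) i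
          = evm v (∑ k, X k j • φ (single k i0 1)) i := rfl
        _ = (∑ k, evm v (X k j • φ (single k i0 1))) i := by rw [h6]
        _ = (∑ k, X k j • (φ (single k i0 1) *ᵥ v)) i := by
            rw [Finset.sum_congr rfl fun k _ => h7 k]
        _ = ∑ k, X k j * (φ (single k i0 1) *ᵥ v) i := by
            simp [Finset.sum_apply]
    have e5 : (M * X) i j = ∑ k, X k j * ((φ (single k i0 1)) *ᵥ v) i := by
      rw [Matrix.mul_apply]
      exact Finset.sum_congr rfl fun k _ => by rw [mul_comm]; rfl
    rw [e1, e3, e4, e5]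
  have hker : ∀ w, M *ᵥ w = 0 → w = 0 := by
    intro w hw
    by_contra hw0
    obtain ⟨i, hi⟩ : ∃ i, w i ≠ 0 := by
      by_contra hall; push_neg at hall; exact hw0 (funext hall)
    set X : Matrix (Fin n) (Fin n) L :=
      Matrix.of (fun a b => if b = i then (if a = i0 then (w i)⁻¹ else 0) else 0) with hX
    have hXw : X *ᵥ w = Pi.single i0 (1:L) := by
      funext a
      have hrfl : (X *ᵥ w) a = ∑ b, X a b * w b := rfl
      rw [hrfl]
      show (∑ b, X a b * w b) = (Pi.single i0 (1:L) : Fin n → L) a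
      have : ∀ b, X a b * w b = if b = i then (if a = i0 then (w i)⁻¹ * w b else 0) else 0 := by
        intro b
        by_cases hb : b = i <;> by_cases ha : a = i0 <;> simp [hX, hb, ha]
      rw [Finset.sum_congr rfl fun b _ => this b, Finset.sum_ite_eq' Finset.univ i]
      by_cases ha : a = i0
      · subst ha; simp [inv_mul_cancel₀ hi]
      · simp [ha, Pi.single_eq_of_ne ha]
    have h7 : M *ᵥ (X *ᵥ w) = 0 := by
      rw [Matrix.mulVec_mulVec, ← hMX X, ← Matrix.mulVec_mulVec, hw, Matrix.mulVec_zero]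
    rw [hXw] at h7
    have h8 : M *ᵥ Pi.single i0 (1:L) = v := by
      rw [Matrix.mulVec_single]
      funext a
      rw [Pi.smul_apply, MulOpposite.op_one, one_smul]
      exact congrFun hfv a
    rw [h8] at h7
    exact hu h7
  have hMinj : Function.Injective M.mulVec := by
    intro a b hab
    have h9 : M *ᵥ (a - b) = 0 := by rw [Matrix.mulVec_sub, hab, sub_self]
    exact sub_eq_zero.mp (hker _ h9)
  have hMunit : IsUnit M := Matrix.mulVec_injective_iff_isUnit.mp hMinj
  refine ⟨M, hMunit, fun X => ?_⟩
  have hdet : IsUnit M.det := (Matrix.isUnit_iff_isUnit_det M).mp hMunit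
  calc φ X = φ X * (M * M⁻¹) := by rw [Matrix.mul_nonsing_inv M hdet, mul_one]
    _ = (φ X * M) * M⁻¹ := by rw [mul_assoc]
    _ = M * X * M⁻¹ := by rw [hMX]

/-- For an absolutely irreducible representation `ρ`, a field automorphism `γ` and a
character `ε`, the twisted conjugate `γ∘ρ` is equivalent to `ρ ⊗ ε` if and only if
`γ(Tr ρ(g)) = Tr(ρ(g))·ε(g)` for all `g`. -/
theorem twist_equiv_iff_trace_relation
    {G : Type*} [Group G] {L : Type*} [Field L] {n : ℕ}
    (ρ : G →* Matrix (Fin n) (Fin n) L)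
    (hirr : MatAbsIrred n L (fun g => ρ g))
    (γ : L ≃+* L) (ε : G →* Lˣ) :
    (∃ M : Matrix (Fin n) (Fin n) L, IsUnit M ∧
        ∀ g, (ρ g).map ⇑γ = M * ((ε g : L) • ρ g) * M⁻¹)
      ↔ ∀ g, γ ((ρ g).trace) = (ρ g).trace * (ε g : L) := by
  constructor
  · rintro ⟨M, hM, hMg⟩ g
    have hdet : IsUnit M.det := (Matrix.isUnit_iff_isUnit_det M).mp hM
    have h1 : γ ((ρ g).trace) = ((ρ g).map ⇑γ).trace := by
      have h := trace_map' (γ : L →+* L) (ρ g)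
      simpa using h.symm
    rw [h1, hMg g, Matrix.trace_mul_comm, ← Matrix.mul_assoc,
      Matrix.nonsing_inv_mul M hdet, Matrix.one_mul, Matrix.trace_smul, smul_eq_mul]
    exact mul_comm _ _
  · intro htr
    rcases Nat.eq_zero_or_pos n with hn0 | hn
    · subst hn0
      exact ⟨1, isUnit_one, fun g => Subsingleton.elim _ _⟩
    set σ : G →* Matrix (Fin n) (Fin n) L := ((γ : L →+* L).mapMatrix.toMonoidHom).comp ρ
      with hσ
    have hσapp : ∀ g, σ g = (ρ g).map ⇑γ := fun g => rfl
    set τ : G →* Matrix (Fin n) (Fin n) L :=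
      { toFun := fun g => (ε g : L) • ρ g
        map_one' := by simp
        map_mul' := fun g h => by
          show (ε (g * h) : L) • ρ (g * h) = ((ε g : L) • ρ g) * ((ε h : L) • ρ h)
          rw [map_mul ρ, map_mul ε, Units.val_mul, mul_smul, smul_mul_assoc, mul_smul_comm] }
      with hτ
    have hτapp : ∀ g, τ g = (ε g : L) • ρ g := fun g => rfl
    have hspanρ := span_range_rho_eq_top ρ hirr
    have hspanτ : Submodule.span L (Set.range ⇑τ) = ⊤ := by
      rw [eq_top_iff, ← hspanρ]
      rw [Submodule.span_le]
      rintro x ⟨g, rfl⟩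
      have hx : ρ g = ((ε g : L))⁻¹ • τ g := by
        rw [hτapp, smul_smul, inv_mul_cancel₀ (Units.ne_zero (ε g)), one_smul]
      rw [hx]
      exact Submodule.smul_mem _ _ (Submodule.subset_span (Set.mem_range_self g))
    have hspanσ : Submodule.span L (Set.range ⇑σ) = ⊤ := by
      rw [eq_top_iff]
      rintro X -
      have hX : (X.map ⇑γ.symm) ∈ Submodule.span L (Set.range ⇑ρ) :=
        hspanρ ▸ Submodule.mem_top
      have hmapped : ∀ Z ∈ Submodule.span L (Set.range ⇑ρ),
          Z.map ⇑γ ∈ Submodule.span L (Set.range ⇑σ) := by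
        intro Z hZ
        induction hZ using Submodule.span_induction with
        | mem x hx => obtain ⟨g, rfl⟩ := hx; exact Submodule.subset_span ⟨g, (hσapp g).symm⟩
        | zero =>
          have h0 : (0 : Matrix (Fin n) (Fin n) L).map ⇑γ = 0 := by
            ext i j; simp
          rw [h0]; exact Submodule.zero_mem _
        | add x y _ _ hx hy =>
          have hadd : (x + y).map ⇑γ = x.map ⇑γ + y.map ⇑γ := by
            ext i j; simp
          rw [hadd]; exact Submodule.add_mem _ hx hy
        | smul c x _ hx =>
          have hsmul : (c • x).map ⇑γ = γ c • x.map ⇑γ := by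
            ext i j; simp
          rw [hsmul]; exact Submodule.smul_mem _ _ hx
      have h6 := hmapped _ hX
      have h7 : (X.map ⇑γ.symm).map ⇑γ = X := by
        ext i j; simp
      rwa [h7] at h6
    have htrσ : ∀ g, (σ g).trace = γ ((ρ g).trace) := by
      intro g
      rw [hσapp]
      have h := trace_map' (γ : L →+* L) (ρ g)
      simpa using h
    set A : (G →₀ L) →ₗ[L] Matrix (Fin n) (Fin n) L := Finsupp.linearCombination L ⇑τ with hA
    set Bσ : (G →₀ L) →ₗ[L] Matrix (Fin n) (Fin n) L := Finsupp.linearCombination L ⇑σ with hB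
    have hAs : Function.Surjective A := by
      have h8 := Finsupp.range_linearCombination (R := L) (v := ⇑τ)
      rw [hspanτ] at h8
      exact LinearMap.range_eq_top.1 h8
    have key : ∀ (l : G →₀ L) (h : G), (Bσ l * σ h).trace = (A l * τ h).trace := by
      intro l h
      rw [hA, hB, Finsupp.linearCombination_apply, Finsupp.linearCombination_apply,
        Finsupp.sum, Finsupp.sum, Finset.sum_mul, Finset.sum_mul, trace_sum, trace_sum]
      refine Finset.sum_congr rfl fun g _ => ?_
      rw [smul_mul_assoc, smul_mul_assoc, trace_smul, trace_smul, ← map_mul σ, ← map_mul τ]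
      refine congrArg (fun t => l g • t) ?_
      have h9 : (τ (g * h)).trace = (ρ (g * h)).trace * (ε (g * h) : L) := by
        rw [hτapp, trace_smul, smul_eq_mul, mul_comm]
      rw [htrσ, htr (g * h), h9]
    have hkerAB : LinearMap.ker A ≤ LinearMap.ker Bσ := by
      intro l hl
      rw [LinearMap.mem_ker] at hl ⊢
      have hzero : ∀ h, (Bσ l * σ h).trace = 0 := by
        intro h; rw [key l h, hl, zero_mul, trace_zero]
      have hallZ : ∀ Z, (Bσ l * Z).trace = 0 := by
        intro Z
        have hZ : Z ∈ Submodule.span L (Set.range ⇑σ) := hspanσ ▸ Submodule.mem_top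
        induction hZ using Submodule.span_induction with
        | mem x hx => obtain ⟨h, rfl⟩ := hx; exact hzero h
        | zero => simp
        | add x y _ _ hx hy => rw [mul_add, trace_add, hx, hy, add_zero]
        | smul c x _ hx => rw [mul_smul_comm, trace_smul, hx, smul_zero]
      ext i j
      have h5 := hallZ (single j i 1)
      rw [trace_mul_stdBasisMatrix] at h5
      simpa using h5
    obtain ⟨φ, hφ⟩ := exists_comp_eq A Bσ hAs hkerAB
    have hφτ : ∀ g, φ (τ g) = σ g := by
      intro g
      have h10 := hφ (Finsupp.single g 1)
      rwa [hA, hB, Finsupp.linearCombination_single, Finsupp.linearCombination_single,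
        one_smul, one_smul] at h10
    have hφ1 : φ 1 = 1 := by
      have h11 := hφτ 1
      rwa [map_one τ, map_one σ] at h11
    have step1 : ∀ g Y, φ (τ g * Y) = σ g * φ Y := by
      intro g Y
      have hY : Y ∈ Submodule.span L (Set.range ⇑τ) := hspanτ ▸ Submodule.mem_top
      induction hY using Submodule.span_induction with
      | mem y hy =>
        obtain ⟨h, rfl⟩ := hy
        rw [← map_mul τ, hφτ, map_mul σ, hφτ]
      | zero => rw [mul_zero, map_zero, mul_zero]
      | add y z _ _ hy hz => rw [mul_add, map_add, hy, hz, map_add, mul_add]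
      | smul c y _ hy =>
        rw [mul_smul_comm, _root_.map_smul, hy, _root_.map_smul, mul_smul_comm]
    have hφmul : ∀ X Y, φ (X * Y) = φ X * φ Y := by
      intro X Y
      have hX : X ∈ Submodule.span L (Set.range ⇑τ) := hspanτ ▸ Submodule.mem_top
      induction hX using Submodule.span_induction with
      | mem x hx => obtain ⟨g, rfl⟩ := hx; rw [step1, hφτ]
      | zero => rw [zero_mul, map_zero, zero_mul]
      | add x y _ _ hx hy => rw [add_mul, map_add, hx, hy, map_add, add_mul]
      | smul c x _ hx =>
        rw [smul_mul_assoc, _root_.map_smul, hx, _root_.map_smul, smul_mul_assoc]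
    obtain ⟨M, hMu, hMφ⟩ := skolem_noether hn φ hφmul hφ1
    refine ⟨M, hMu, fun g => ?_⟩
    calc (ρ g).map ⇑γ = σ g := (hσapp g).symm
      _ = φ (τ g) := (hφτ g).symm
      _ = M * τ g * M⁻¹ := hMφ (τ g)
      _ = M * ((ε g : L) • ρ g) * M⁻¹ := by rw [hτapp]
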